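/- Let W : GL⁺(2) → ℝ be objective, isotropic and isochoric. Then there exists a unique function z : [1,∞) → ℝ such that W(F) = z(‖F‖² / (2·det F)) for all F ∈ GL⁺(2), where ‖·‖ denotes the Frobenius norm; moreover z(r) = W(diag(r + √(r² − 1), 1)) for all r ≥ 1. -/

import Mathlib

open Matrix Set

noncomputable section

/-- The space of real 2×2 matrices. -/
abbrev Mat2 : Type := Matrix (Fin 2) (Fin 2) ℝ

/-- The special orthogonal group SO(2): orthogonal 2×2 matrices with determinant 1. -/
def SO2 : Set Mat2 := {Q : Mat2 | Qᵀ * Q = 1 ∧ Q.det = 1}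

/-- A function `W` (viewed on GL⁺(2) = {F | 0 < det F}) is polyconvex if there is a
convex function `P : ℝ^{2×2} × ℝ → ℝ ∪ {+∞}` with `W F = P (F, det F)` on GL⁺(2). -/
def Polyconvex (W : Mat2 → ℝ) : Prop :=
  ∃ P : Mat2 × ℝ → EReal,
    (∀ x y : Mat2 × ℝ, ∀ a b : ℝ, 0 ≤ a → 0 ≤ b → a + b = 1 →
      P (a • x + b • y) ≤ (a : EReal) * P x + (b : EReal) * P y) ∧
    (∀ F : Mat2, 0 < F.det → (W F : EReal) = P (F, F.det))

/-- Rank-one convexity of `W` on GL⁺(2): convexity along rank-one line segments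
lying in GL⁺(2). -/
def RankOneConvex (W : Mat2 → ℝ) : Prop :=
  ∀ F : Mat2, 0 < F.det → ∀ ξ η : Fin 2 → ℝ, ∀ θ : ℝ, θ ∈ Set.Icc (0:ℝ) 1 →
    (∀ t ∈ Set.Icc (0:ℝ) 1, 0 < (F + t • vecMulVec ξ η).det) →
    W (F + (1 - θ) • vecMulVec ξ η) ≤ θ * W F + (1 - θ) * W (F + vecMulVec ξ η)

/-- Objectivity and isotropy: bi-SO(2)-invariance on GL⁺(2). -/
def ObjectiveIsotropic (W : Mat2 → ℝ) : Prop :=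
  ∀ F : Mat2, 0 < F.det → ∀ Q₁ Q₂ : Mat2, Q₁ ∈ SO2 → Q₂ ∈ SO2 →
    W (Q₁ * F * Q₂) = W F

/-- Isochoric: invariance under positive scaling on GL⁺(2). -/
def Isochoric (W : Mat2 → ℝ) : Prop :=
  ∀ F : Mat2, 0 < F.det → ∀ a : ℝ, 0 < a → W (a • F) = W F

/-- The 2×2 diagonal matrix diag(a, b). -/
def diag2 (a b : ℝ) : Mat2 := !![a, 0; 0, b]

/-- The squared Frobenius norm of a 2×2 matrix. -/
def frobSq (F : Mat2) : ℝ := ∑ i, ∑ j, (F i j) ^ 2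

/-- The operator norm of `F` induced by the Euclidean norm on ℝ²:
the supremum of ‖F·x‖ over Euclidean-unit vectors x. -/
def opNorm2 (F : Mat2) : ℝ :=
  sSup {r : ℝ | ∃ x : Fin 2 → ℝ, (x 0) ^ 2 + (x 1) ^ 2 = 1 ∧
    r = Real.sqrt ((F.mulVec x 0) ^ 2 + (F.mulVec x 1) ^ 2)}


/-- Rotation matrix by angle θ. -/
def rot (θ : ℝ) : Mat2 := !![Real.cos θ, -Real.sin θ; Real.sin θ, Real.cos θ]

lemma rot_transpose (θ : ℝ) :
    (rot θ)ᵀ = !![Real.cos θ, Real.sin θ; -Real.sin θ, Real.cos θ] := by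
  ext i j; fin_cases i <;> fin_cases j <;> simp [rot, Matrix.transpose_apply]

lemma rot_mem (θ : ℝ) : rot θ ∈ SO2 := by
  have h := Real.sin_sq_add_cos_sq θ
  constructor
  · show (rot θ)ᵀ * rot θ = 1
    rw [rot_transpose]
    simp only [rot]
    rw [Matrix.mul_fin_two, Matrix.one_fin_two]
    ext i j; fin_cases i <;> fin_cases j <;> simp <;> nlinarith
  · show (rot θ).det = 1
    rw [rot, Matrix.det_fin_two_of]; nlinarith

lemma exists_angle (x y : ℝ) : ∃ θ : ℝ,
    Real.sqrt (x^2+y^2) * Real.cos θ = x ∧ Real.sqrt (x^2+y^2) * Real.sin θ = y := by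
  refine ⟨Complex.arg ⟨x, y⟩, ?_, ?_⟩ <;>
  · have h1 := Complex.norm_mul_cos_arg (⟨x,y⟩ : ℂ)
    have h2 := Complex.norm_mul_sin_arg (⟨x,y⟩ : ℂ)
    have h3 : ‖(⟨x,y⟩ : ℂ)‖ = Real.sqrt (x^2+y^2) := by
      rw [Complex.norm_def, Complex.normSq_mk]; ring_nf
    rw [h3] at h1 h2
    assumption

lemma det_diag2 (a b : ℝ) : (diag2 a b).det = a * b := by
  rw [diag2, Matrix.det_fin_two_of]; ring

lemma frobSq_diag2 (a b : ℝ) : frobSq (diag2 a b) = a^2 + b^2 := by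
  simp [frobSq, diag2, Fin.sum_univ_two]

lemma svd2 (F : Mat2) (hF : 0 < F.det) :
    ∃ α β : ℝ, 0 ≤ β ∧ β < α ∧
      F.det = α^2 - β^2 ∧ frobSq F = 2*(α^2+β^2) ∧
      ∃ x y : ℝ, F = rot x * diag2 (α+β) (α-β) * rot y := by
  obtain ⟨φ, hφc, hφs⟩ := exists_angle ((F 0 0 + F 1 1)/2) ((F 1 0 - F 0 1)/2)
  obtain ⟨ψ, hψc, hψs⟩ := exists_angle ((F 0 0 - F 1 1)/2) ((F 0 1 + F 1 0)/2)
  set α := Real.sqrt (((F 0 0 + F 1 1)/2)^2 + ((F 1 0 - F 0 1)/2)^2) with hα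
  set β := Real.sqrt (((F 0 0 - F 1 1)/2)^2 + ((F 0 1 + F 1 0)/2)^2) with hβ
  have hα2 : α^2 = ((F 0 0 + F 1 1)/2)^2 + ((F 1 0 - F 0 1)/2)^2 := Real.sq_sqrt (by positivity)
  have hβ2 : β^2 = ((F 0 0 - F 1 1)/2)^2 + ((F 0 1 + F 1 0)/2)^2 := Real.sq_sqrt (by positivity)
  have hd : F.det = α^2 - β^2 := by rw [Matrix.det_fin_two, hα2, hβ2]; ring
  have hβ0 : 0 ≤ β := Real.sqrt_nonneg _
  have hα0 : 0 ≤ α := Real.sqrt_nonneg _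
  refine ⟨α, β, hβ0, by nlinarith, hd, ?_, ?_⟩
  · simp only [frobSq, Fin.sum_univ_two]; linear_combination (-2)*hα2 + (-2)*hβ2
  · refine ⟨(φ+ψ)/2, (φ-ψ)/2, ?_⟩
    set x := (φ+ψ)/2 with hx
    set y := (φ-ψ)/2 with hy
    have hφ' : φ = x + y := by rw [hx, hy]; ring
    have hψ' : ψ = x - y := by rw [hx, hy]; ring
    rw [hφ'] at hφc hφs
    rw [hψ'] at hψc hψs
    rw [Real.cos_add] at hφc
    rw [Real.sin_add] at hφs
    rw [Real.cos_sub] at hψc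
    rw [Real.sin_sub] at hψs
    rw [Matrix.eta_fin_two F]
    simp only [rot, diag2]
    rw [Matrix.mul_fin_two, Matrix.mul_fin_two]
    ext i j
    fin_cases i <;> fin_cases j <;> simp <;>
      first
      | linear_combination -hφc - hψc
      | linear_combination hφs - hψs
      | linear_combination -hφs - hψs
      | linear_combination -hφc + hψc

lemma key_repr (W : Mat2 → ℝ) (hOI : ObjectiveIsotropic W) (hIso : Isochoric W)
    (F : Mat2) (hF : 0 < F.det) :
    W F = W (diag2 (frobSq F / (2 * F.det) +
      Real.sqrt ((frobSq F / (2 * F.det)) ^ 2 - 1)) 1) := by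
  obtain ⟨α, β, hβ0, hβα, hd, hf, x, y, hdec⟩ := svd2 F hF
  have hα0 : 0 < α := lt_of_le_of_lt hβ0 hβα
  have hab : 0 < α - β := by linarith
  have hab' : 0 < α + β := by linarith
  have hds : α^2 - β^2 ≠ 0 := by nlinarith
  have hdetD : 0 < (diag2 (α+β) (α-β)).det := by rw [det_diag2]; positivity
  have h1 : W F = W (diag2 (α+β) (α-β)) := by
    rw [hdec]; exact hOI _ hdetD _ _ (rot_mem x) (rot_mem y)
  have ht : 0 < (α+β)/(α-β) := by positivity
  have hdetT : 0 < (diag2 ((α+β)/(α-β)) 1).det := by rw [det_diag2]; simpa using ht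
  have hsc : diag2 (α+β) (α-β) = (α - β) • diag2 ((α+β)/(α-β)) 1 := by
    ext i j; fin_cases i <;> fin_cases j <;>
      simp [diag2, Matrix.smul_apply] <;> field_simp
  have h2 : W (diag2 (α+β) (α-β)) = W (diag2 ((α+β)/(α-β)) 1) := by
    rw [hsc]; exact hIso _ hdetT (α - β) hab
  have hr : frobSq F / (2 * F.det) = (α^2+β^2)/(α^2-β^2) := by
    rw [hf, hd]; field_simp
  have hsqrt : Real.sqrt (((α^2+β^2)/(α^2-β^2))^2 - 1) = 2*α*β/(α^2-β^2) := by
    rw [show ((α^2+β^2)/(α^2-β^2))^2 - 1 = (2*α*β/(α^2-β^2))^2 by field_simp; ring]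
    have hpos : (0:ℝ) < α^2 - β^2 := by nlinarith
    exact Real.sqrt_sq (div_nonneg (by positivity) hpos.le)
  have hval : (α^2+β^2)/(α^2-β^2) + 2*α*β/(α^2-β^2) = (α+β)/(α-β) := by
    rw [← add_div]
    rw [show α^2 - β^2 = (α-β)*(α+β) by ring]
    rw [show α^2+β^2 + 2*α*β = (α+β)*(α+β) by ring]
    rw [mul_div_mul_right _ _ (ne_of_gt hab')]
  rw [h1, h2, hr, hsqrt, hval]

/-- representation of objective, isotropic, isochoric `W` via a unique
function `z : [1,∞) → ℝ` of the distortion `‖F‖²/(2 det F)`, with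
`z(r) = W(diag(r + √(r²−1), 1))`. -/
theorem isochoric_representation_distortion (W : Mat2 → ℝ)
    (hOI : ObjectiveIsotropic W) (hIso : Isochoric W) :
    ∃ z : ℝ → ℝ,
      (∀ F : Mat2, 0 < F.det → W F = z (frobSq F / (2 * F.det))) ∧
      (∀ r : ℝ, 1 ≤ r → z r = W (diag2 (r + Real.sqrt (r ^ 2 - 1)) 1)) ∧
      (∀ z' : ℝ → ℝ,
        (∀ F : Mat2, 0 < F.det → W F = z' (frobSq F / (2 * F.det))) →
        ∀ r : ℝ, 1 ≤ r → z' r = z r) := by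
  refine ⟨fun r => W (diag2 (r + Real.sqrt (r ^ 2 - 1)) 1), ?_, fun r _ => rfl, ?_⟩
  · intro F hF
    exact key_repr W hOI hIso F hF
  · intro z' hz' r hr
    set t := r + Real.sqrt (r ^ 2 - 1) with ht
    have hs : Real.sqrt (r ^ 2 - 1) ^ 2 = r ^ 2 - 1 := Real.sq_sqrt (by nlinarith)
    have ht1 : (1:ℝ) ≤ t := by
      have := Real.sqrt_nonneg (r ^ 2 - 1); rw [ht]; linarith
    have ht0 : (0:ℝ) < t := by linarith
    have hdetpos : 0 < (diag2 t 1).det := by rw [det_diag2]; linarith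
    have hfr : frobSq (diag2 t 1) / (2 * (diag2 t 1).det) = r := by
      rw [frobSq_diag2, det_diag2]
      have h2 : t ^ 2 + 1 ^ 2 = r * (2 * (t * 1)) := by rw [ht]; linear_combination hs
      rw [h2]
      field_simp
    calc z' r = z' (frobSq (diag2 t 1) / (2 * (diag2 t 1).det)) := by rw [hfr]
      _ = W (diag2 t 1) := (hz' _ hdetpos).symm
      _ = W (diag2 (r + Real.sqrt (r ^ 2 - 1)) 1) := by rw [ht]
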